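/- If the beliefs Π satisfy convex independence, then optimal full extraction holds: for every value function v : T → ℝ there exists a menu c : T → ℝ^S achieving optimal full extraction for (Π, v). -/

import Mathlib

noncomputable section

/-- Euclidean inner product on ℝ^S. -/
def dotp {S : Type*} [Fintype S] (x y : S → ℝ) : ℝ := ∑ s, x s * y s

/-- The contract `c t` is mixed-strategy optimal for type `t` in the menu `c`:
its expected cost is at most that of every mixed strategy over the menu, for every belief in `P t`. -/
def MixedOptimal {S T : Type*} [Fintype S] [Fintype T]
    (P : T → Set (S → ℝ)) (c : T → (S → ℝ)) (t : T) : Prop :=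
  ∀ σ ∈ stdSimplex ℝ T, ∀ π ∈ P t, dotp π (c t) ≤ ∑ s, σ s * dotp π (c s)

/-- A menu `c` achieves optimal full extraction for beliefs `P` and values `v`. -/
def OptimalFullExtraction {S T : Type*} [Fintype S] [Fintype T]
    (P : T → Set (S → ℝ)) (v : T → ℝ) (c : T → (S → ℝ)) : Prop :=
  ∀ t : T, MixedOptimal P c t ∧ (∀ π ∈ P t, dotp π (c t) ≤ v t) ∧
    (∃ π ∈ P t, dotp π (c t) = v t)

theorem stmt_4 {S T : Type*} [Fintype S] [Fintype T] [Nonempty S] [Nonempty T]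
    (P : T → Set (S → ℝ))
    (hne : ∀ t, (P t).Nonempty) (hcl : ∀ t, IsClosed (P t))
    (hcv : ∀ t, Convex ℝ (P t)) (hsub : ∀ t, P t ⊆ stdSimplex ℝ S)
    (hci : ∀ t : T, P t ∩ closure (convexHull ℝ (⋃ s ∈ {s : T | s ≠ t}, P s)) = ∅)
    (v : T → ℝ) :
    ∃ c : T → (S → ℝ), OptimalFullExtraction P v c := by
  classical
  have hrep : ∀ (g : (S → ℝ) →L[ℝ] ℝ) (π : S → ℝ),
      ∑ j, π j * g (Pi.single j 1) = g π := by
    intro g π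
    have hπ : π = ∑ j : S, π j • (Pi.single j 1 : S → ℝ) := by
      ext k
      simp [Pi.single_apply, Finset.sum_ite_eq', mul_comm]
    conv_rhs => rw [hπ]
    rw [map_sum]
    simp [smul_eq_mul]
  set K : T → Set (S → ℝ) := fun t => closure (convexHull ℝ (⋃ s ∈ {s : T | s ≠ t}, P s))
    with hKdef
  have hsep : ∀ t : T, ∃ fu : ((S → ℝ) →L[ℝ] ℝ) × ℝ × ℝ,
      (∀ π ∈ P t, fu.1 π < fu.2.1) ∧ fu.2.1 < fu.2.2 ∧ ∀ π ∈ K t, fu.2.2 < fu.1 π := by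
    intro t
    have hKcpt : IsCompact (P t) :=
      (isCompact_stdSimplex ℝ S).of_isClosed_subset (hcl t) (hsub t)
    have hdisj : Disjoint (P t) (K t) := Set.disjoint_iff_inter_eq_empty.mpr (hci t)
    obtain ⟨f, u, w, h1, h2, h3⟩ :=
      geometric_hahn_banach_compact_closed (hcv t) hKcpt
        ((convex_convexHull ℝ _).closure) isClosed_closure hdisj
    exact ⟨⟨f, u, w⟩, h1, h2, h3⟩
  choose fu hfu1 hfu2 hfu3 using hsep
  set f : T → (S → ℝ) →L[ℝ] ℝ := fun t => (fu t).1 with hfdef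
  set u : T → ℝ := fun t => (fu t).2.1 with hudef
  set w : T → ℝ := fun t => (fu t).2.2 with hwdef
  have hmax : ∀ t, ∃ π ∈ P t, ∀ π' ∈ P t, f t π' ≤ f t π := by
    intro t
    have hKcpt : IsCompact (P t) :=
      (isCompact_stdSimplex ℝ S).of_isClosed_subset (hcl t) (hsub t)
    obtain ⟨π, hπ, hm⟩ := hKcpt.exists_isMaxOn (hne t) ((f t).continuous.continuousOn)
    exact ⟨π, hπ, fun π' hπ' => hm hπ'⟩
  choose πs hπs hπm using hmax
  set m : T → ℝ := fun t => f t (πs t) - u t with hmdef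
  have hm_neg : ∀ t, m t < 0 := fun t => sub_neg.mpr (hfu1 t _ (hπs t))
  set ε : T → ℝ := fun t => w t - u t with hεdef
  have hε_pos : ∀ t, 0 < ε t := fun t => sub_pos.mpr (hfu2 t)
  have hεm : ∀ t, 0 < ε t - m t := fun t => by
    have := hm_neg t; have := hε_pos t; linarith
  set V : ℝ := Finset.univ.sup' Finset.univ_nonempty v with hVdef
  have hV : ∀ t, v t ≤ V := fun t => Finset.le_sup' v (Finset.mem_univ t)
  set lam : T → ℝ := fun t => max 0 ((V - v t) / (ε t - m t)) with hlamdef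
  have hlam0 : ∀ t, 0 ≤ lam t := fun t => le_max_left _ _
  have hlamV : ∀ t, V - v t ≤ lam t * (ε t - m t) := by
    intro t
    have h := hεm t
    calc V - v t = ((V - v t) / (ε t - m t)) * (ε t - m t) := by
          field_simp
      _ ≤ lam t * (ε t - m t) :=
          mul_le_mul_of_nonneg_right (le_max_right _ _) h.le
  set c : T → (S → ℝ) :=
    fun t j => v t - lam t * m t + lam t * (f t (Pi.single j 1) - u t) with hcdef
  have hdot : ∀ (t : T) (π : S → ℝ), π ∈ stdSimplex ℝ S →
      dotp π (c t) = v t - lam t * m t + lam t * (f t π - u t) := by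
    intro t π hπ
    have hsum : ∑ j, π j = 1 := hπ.2
    simp only [dotp, hcdef]
    have hterm : ∀ j, π j * (v t - lam t * m t + lam t * (f t (Pi.single j 1) - u t))
        = (v t - lam t * m t - lam t * u t) * π j
          + lam t * (π j * f t (Pi.single j 1)) := by
      intro j; ring
    rw [Finset.sum_congr rfl fun j _ => hterm j, Finset.sum_add_distrib,
      ← Finset.mul_sum, ← Finset.mul_sum, hsum, hrep]
    ring
  have hIR : ∀ t, ∀ π ∈ P t, dotp π (c t) ≤ v t := by
    intro t π hπ
    rw [hdot t π (hsub t hπ)]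
    have h1 : f t π ≤ f t (πs t) := hπm t π hπ
    have h2 : f t π - u t ≤ m t := by rw [hmdef]; simp; linarith
    nlinarith [hlam0 t]
  have hEq : ∀ t, dotp (πs t) (c t) = v t := by
    intro t
    rw [hdot t _ (hsub t (hπs t)), hmdef]
    ring
  have hmemK : ∀ t s : T, t ≠ s → ∀ π ∈ P t, π ∈ K s := by
    intro t s hts π hπ
    apply subset_closure
    apply subset_convexHull
    exact Set.mem_biUnion (show t ∈ {s' : T | s' ≠ s} from hts) hπ
  have hcomp : ∀ t, ∀ π ∈ P t, ∀ s, dotp π (c t) ≤ dotp π (c s) := by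
    intro t π hπ s
    rcases eq_or_ne t s with rfl | hts
    · exact le_refl _
    · have hπK : π ∈ K s := hmemK t s hts π hπ
      have hgt : w s < f s π := hfu3 s π hπK
      have hge : ε s ≤ f s π - u s := by rw [hεdef]; simp; linarith
      have h1 : dotp π (c t) ≤ v t := hIR t π hπ
      have h2 : dotp π (c s) = v s - lam s * m s + lam s * (f s π - u s) :=
        hdot s π (hsub t hπ)
      have h3 : v t ≤ V := hV t
      have h4 : V - v s ≤ lam s * (ε s - m s) := hlamV s
      have h5 : lam s * (ε s - m s) ≤ lam s * (f s π - u s - m s) := by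
        apply mul_le_mul_of_nonneg_left _ (hlam0 s)
        linarith
      linarith
  refine ⟨c, fun t => ⟨?_, fun π hπ => hIR t π hπ, ⟨πs t, hπs t, hEq t⟩⟩⟩
  intro σ hσ π hπ
  calc dotp π (c t) = ∑ s, σ s * dotp π (c t) := by
        rw [← Finset.sum_mul, hσ.2, one_mul]
    _ ≤ ∑ s, σ s * dotp π (c s) := by
        apply Finset.sum_le_sum
        intro s _
        exact mul_le_mul_of_nonneg_left (hcomp t π hπ s) (hσ.1 s)
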